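/- Let α ∈ (0, 1/2), T > 0, η₀ ≥ 0, let b : ℝ → ℝ be Lipschitz and let ζ : [0,T] → ℝ be (1−α)-Hölder continuous with ζ₀ = 0. For ε > 0 let x^ε be the unique continuous solution of x^ε_t = η₀ + ζ_t + ∫₀ᵗ [ b(x^ε_s) + (1/ε) f(x^ε_s) ] ds, and let G be the uniform limit of x^ε as ε → 0. Then: (i) for every t ∈ [0,T] the limit y_t := lim_{ε→0} (1/ε) ∫₀ᵗ f(x^ε_s) ds exists and is finite; (ii) G_t ≥ 0 for all t; (iii) G_t = η₀ + ζ_t + ∫₀ᵗ b(G_s) ds + y_t for all t; (iv) y₀ = 0 and y is continuous and nondecreasing; (v) ∫₀ᵗ G_s dy_s = 0 for all t ∈ [0,T], where the integral is with respect to the Lebesgue–Stieltjes measure of y; and (vi) G is (1−α)-Hölder continuous on [0,T]. -/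

import Mathlib

open MeasureTheory Set Filter Topology

noncomputable section

/-- `f` is `γ`-Hölder continuous on `[a,b]`. -/
def HolderOnIcc (γ a b : ℝ) (f : ℝ → ℝ) : Prop :=
  ∃ C : ℝ, 0 ≤ C ∧ ∀ s ∈ Set.Icc a b, ∀ t ∈ Set.Icc a b, |f t - f s| ≤ C * |t - s| ^ γ

/-- The penalization function `f`: a `C²_b` nonincreasing function vanishing on `[0, ∞)`
with `0 < f x ≤ x⁻` for `x < 0`. -/
def PenaltyFun (f : ℝ → ℝ) : Prop :=
  ContDiff ℝ 2 f ∧ Antitone f ∧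
  (∃ M : ℝ, ∀ x : ℝ, |deriv f x| ≤ M ∧ |deriv (deriv f) x| ≤ M) ∧
  (∀ x : ℝ, 0 ≤ x → f x = 0) ∧
  (∀ x : ℝ, x < 0 → 0 < f x ∧ f x ≤ -x)

/-- `∫₀ᵗ x_s dy_s = 0` for all `t ∈ [0,T]`, where the integral is taken with respect to
the Lebesgue–Stieltjes measure of (any Stieltjes extension of) the nondecreasing
function `y` on `[0,T]`, extended by `0` to the left of `0` and by `y T` to the
right of `T`. -/
def StieltjesIntegralZero (T : ℝ) (x y : ℝ → ℝ) : Prop :=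
  ∀ Y : StieltjesFunction ℝ,
    (∀ t : ℝ, t ≤ 0 → Y t = 0) → (∀ t ∈ Set.Icc 0 T, Y t = y t) →
    (∀ t : ℝ, T ≤ t → Y t = y T) →
    ∀ t ∈ Set.Icc 0 T, ∫ s in Set.Icc (0 : ℝ) t, x s ∂Y.measure = 0

lemma holder_continuousOn {γ a b : ℝ} {g : ℝ → ℝ} (hγ : 0 < γ)
    (h : HolderOnIcc γ a b g) : ContinuousOn g (Set.Icc a b) := by
  obtain ⟨C, hC, hb⟩ := h
  intro s hs
  have h1 : Tendsto (fun t => C * |t - s| ^ γ) (nhdsWithin s (Set.Icc a b)) (nhds 0) := by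
    have h3 : Tendsto (fun t : ℝ => |t - s|) (nhds s) (nhds 0) := by
      have : Tendsto (fun t : ℝ => t - s) (nhds s) (nhds 0) := by
        simpa using (tendsto_id (x := nhds s)).sub_const s
      simpa using this.abs
    have h2 : Tendsto (fun t : ℝ => |t - s| ^ γ) (nhds s) (nhds 0) := by
      have hc := (Real.continuousAt_rpow_const 0 γ (Or.inr hγ.le)).tendsto
      have := hc.comp h3
      simpa [Real.zero_rpow (ne_of_gt hγ), Function.comp_def] using this
    have := (tendsto_const_nhds (x := C)).mul h2
    simp only [mul_zero] at this
    exact this.mono_left nhdsWithin_le_nhds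
  rw [ContinuousWithinAt, Metric.tendsto_nhds]
  intro δ hδ
  filter_upwards [h1.eventually (eventually_lt_nhds hδ), self_mem_nhdsWithin] with t h1t h2t
  calc dist (g t) (g s) = |g t - g s| := by rw [Real.dist_eq]
  _ ≤ C * |t - s| ^ γ := hb s hs t h2t
  _ < δ := h1t

/-- The uniform limit `G` of the penalized solutions solves the Skorokhod problem for
`z_t = η₀ + ζ_t + ∫₀ᵗ b(G_s) ds` and is `(1-α)`-Hölder continuous. -/
theorem limit_solves_skorokhod
    (α T η₀ : ℝ) (hα : α ∈ Set.Ioo (0 : ℝ) (1 / 2)) (hT : 0 < T) (hη : 0 ≤ η₀)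
    (b : ℝ → ℝ) (K : NNReal) (hb : LipschitzWith K b)
    (ζ : ℝ → ℝ) (hζ : HolderOnIcc (1 - α) 0 T ζ) (hζ0 : ζ 0 = 0)
    (f : ℝ → ℝ) (hf : PenaltyFun f)
    (x : ℝ → ℝ → ℝ)
    (hx_cont : ∀ ε : ℝ, 0 < ε → ContinuousOn (x ε) (Set.Icc 0 T))
    (hx : ∀ ε : ℝ, 0 < ε → ∀ t ∈ Set.Icc 0 T,
      x ε t = η₀ + ζ t + ∫ s in (0 : ℝ)..t, (b (x ε s) + (1 / ε) * f (x ε s)))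
    (G : ℝ → ℝ) (hG_cont : ContinuousOn G (Set.Icc 0 T))
    (hG_lim : Filter.Tendsto (fun ε => sSup ((fun t => |x ε t - G t|) '' Set.Icc 0 T))
      (nhdsWithin 0 (Set.Ioi 0)) (nhds 0)) :
    ∃ y : ℝ → ℝ,
      (∀ t ∈ Set.Icc 0 T,
        Filter.Tendsto (fun ε => (1 / ε) * ∫ s in (0 : ℝ)..t, f (x ε s))
          (nhdsWithin 0 (Set.Ioi 0)) (nhds (y t))) ∧
      (∀ t ∈ Set.Icc 0 T, 0 ≤ G t) ∧
      (∀ t ∈ Set.Icc 0 T,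
        G t = η₀ + ζ t + (∫ s in (0 : ℝ)..t, b (G s)) + y t) ∧
      y 0 = 0 ∧ ContinuousOn y (Set.Icc 0 T) ∧ MonotoneOn y (Set.Icc 0 T) ∧
      StieltjesIntegralZero T G y ∧
      HolderOnIcc (1 - α) 0 T G := by
  obtain ⟨hα0, hα12⟩ := hα
  have hγ : 0 < 1 - α := by linarith
  have hfc : Continuous f := hf.1.continuous
  have hbc : Continuous b := hb.continuous
  have hf_anti := hf.2.1
  have hf_zero := hf.2.2.2.1
  have hf_pos := hf.2.2.2.2
  have hf0 : ∀ u : ℝ, 0 ≤ f u := by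
    intro u
    rcases lt_or_ge u 0 with h | h
    · exact (hf_pos u h).1.le
    · rw [hf_zero u h]
  have h0T : (0 : ℝ) ∈ Set.Icc 0 T := ⟨le_rfl, hT.le⟩
  set l := nhdsWithin (0 : ℝ) (Set.Ioi 0) with hl
  set D : ℝ → ℝ := fun ε => sSup ((fun t => |x ε t - G t|) '' Set.Icc 0 T) with hD
  have hDlim : Tendsto D l (nhds 0) := hG_lim
  have hDb : ∀ ε : ℝ, 0 < ε → ∀ u ∈ Set.Icc 0 T, |x ε u - G u| ≤ D ε := by
    intro ε hε u hu
    have hcont : ContinuousOn (fun t => |x ε t - G t|) (Set.Icc 0 T) :=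
      ((hx_cont ε hε).sub hG_cont).abs
    have hbdd : BddAbove ((fun t => |x ε t - G t|) '' Set.Icc 0 T) :=
      (isCompact_Icc.image_of_continuousOn hcont).bddAbove
    exact le_csSup hbdd (mem_image_of_mem _ hu)
  have hεpos : ∀ᶠ ε in l, 0 < ε := eventually_mem_nhdsWithin
  have h_unif : ∀ δ : ℝ, 0 < δ →
      ∀ᶠ ε in l, 0 < ε ∧ ∀ u ∈ Set.Icc 0 T, |x ε u - G u| < δ := by
    intro δ hδ
    filter_upwards [hεpos, hDlim.eventually (eventually_lt_nhds hδ)] with ε h1 h2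
    exact ⟨h1, fun u hu => lt_of_le_of_lt (hDb ε h1 u hu) h2⟩
  have huIcc : ∀ u ∈ Set.Icc (0:ℝ) T, ∀ v ∈ Set.Icc (0:ℝ) T, Set.uIcc u v ⊆ Set.Icc 0 T :=
    fun u hu v hv => Set.uIcc_subset_Icc hu hv
  have hIb : ∀ ε : ℝ, 0 < ε → ∀ u ∈ Set.Icc (0:ℝ) T, ∀ v ∈ Set.Icc (0:ℝ) T,
      IntervalIntegrable (fun s => b (x ε s)) volume u v := by
    intro ε hε u hu v hv
    exact ((hbc.comp_continuousOn (hx_cont ε hε)).mono (huIcc u hu v hv)).intervalIntegrable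
  have hIf : ∀ ε : ℝ, 0 < ε → ∀ u ∈ Set.Icc (0:ℝ) T, ∀ v ∈ Set.Icc (0:ℝ) T,
      IntervalIntegrable (fun s => f (x ε s)) volume u v := by
    intro ε hε u hu v hv
    exact ((hfc.comp_continuousOn (hx_cont ε hε)).mono (huIcc u hu v hv)).intervalIntegrable
  have hIbG : ∀ u ∈ Set.Icc (0:ℝ) T, ∀ v ∈ Set.Icc (0:ℝ) T,
      IntervalIntegrable (fun s => b (G s)) volume u v := by
    intro u hu v hv
    exact ((hbc.comp_continuousOn hG_cont).mono (huIcc u hu v hv)).intervalIntegrable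
  have hident : ∀ ε : ℝ, 0 < ε → ∀ t ∈ Set.Icc 0 T,
      (1 / ε) * ∫ s in (0 : ℝ)..t, f (x ε s) =
        x ε t - η₀ - ζ t - ∫ s in (0 : ℝ)..t, b (x ε s) := by
    intro ε hε t ht
    have h1 := hx ε hε t ht
    have h2 : (∫ s in (0 : ℝ)..t, (b (x ε s) + (1 / ε) * f (x ε s))) =
        (∫ s in (0 : ℝ)..t, b (x ε s)) + (1 / ε) * ∫ s in (0 : ℝ)..t, f (x ε s) := by
      rw [intervalIntegral.integral_add (hIb ε hε 0 h0T t ht)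
        ((hIf ε hε 0 h0T t ht).const_mul _), intervalIntegral.integral_const_mul]
    rw [h2] at h1
    linarith
  have hxG : ∀ t ∈ Set.Icc 0 T, Tendsto (fun ε => x ε t) l (nhds (G t)) := by
    intro t ht
    have h0 : Tendsto (fun ε => x ε t - G t) l (nhds 0) := by
      apply squeeze_zero_norm' ?_ hDlim
      filter_upwards [hεpos] with ε hε
      exact hDb ε hε t ht
    have := h0.add_const (G t)
    simpa using this
  have hintG : ∀ t ∈ Set.Icc 0 T, Tendsto (fun ε => ∫ s in (0:ℝ)..t, b (x ε s)) l
      (nhds (∫ s in (0:ℝ)..t, b (G s))) := by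
    intro t ht
    have h0 : Tendsto (fun ε => (∫ s in (0:ℝ)..t, b (x ε s)) - ∫ s in (0:ℝ)..t, b (G s)) l
        (nhds 0) := by
      apply squeeze_zero_norm' (a := fun ε => (K : ℝ) * T * D ε)
      · filter_upwards [hεpos] with ε hε
        have hsubint : (∫ s in (0:ℝ)..t, b (x ε s)) - ∫ s in (0:ℝ)..t, b (G s)
            = ∫ s in (0:ℝ)..t, (b (x ε s) - b (G s)) :=
          (intervalIntegral.integral_sub (hIb ε hε 0 h0T t ht) (hIbG 0 h0T t ht)).symm
        have hptw : ∀ u ∈ Set.uIoc (0:ℝ) t, ‖b (x ε u) - b (G u)‖ ≤ (K : ℝ) * D ε := by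
          intro u hu
          have hu' : u ∈ Set.Icc 0 T := (huIcc 0 h0T t ht) (Set.uIoc_subset_uIcc hu)
          calc ‖b (x ε u) - b (G u)‖ = dist (b (x ε u)) (b (G u)) := by
                rw [dist_eq_norm]
          _ ≤ K * dist (x ε u) (G u) := hb.dist_le_mul _ _
          _ ≤ K * D ε := by
                refine mul_le_mul_of_nonneg_left ?_ K.coe_nonneg
                rw [Real.dist_eq]
                exact hDb ε hε u hu'
        have hD0 : 0 ≤ D ε := le_trans (abs_nonneg _) (hDb ε hε 0 h0T)
        calc ‖(∫ s in (0:ℝ)..t, b (x ε s)) - ∫ s in (0:ℝ)..t, b (G s)‖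
            = ‖∫ s in (0:ℝ)..t, (b (x ε s) - b (G s))‖ := by rw [hsubint]
        _ ≤ (K : ℝ) * D ε * |t - 0| :=
              intervalIntegral.norm_integral_le_of_norm_le_const hptw
        _ ≤ (K : ℝ) * T * D ε := by
              rw [sub_zero, abs_of_nonneg ht.1]
              have hmul : ((K:ℝ) * D ε) * t ≤ ((K:ℝ) * D ε) * T :=
                mul_le_mul_of_nonneg_left ht.2 (mul_nonneg K.coe_nonneg hD0)
              linarith [hmul]
      · have := (tendsto_const_nhds (x := (K : ℝ) * T) (f := l)).mul hDlim
        simpa using this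
    have := h0.add_const (∫ s in (0:ℝ)..t, b (G s))
    simpa using this
  set z : ℝ → ℝ := fun t => η₀ + ζ t + ∫ s in (0:ℝ)..t, b (G s) with hzdef
  set y : ℝ → ℝ := fun t => G t - z t with hydef
  have hlim : ∀ t ∈ Set.Icc 0 T,
      Tendsto (fun ε => (1 / ε) * ∫ s in (0 : ℝ)..t, f (x ε s)) l (nhds (y t)) := by
    intro t ht
    have h1 : Tendsto (fun ε => x ε t - η₀ - ζ t - ∫ s in (0:ℝ)..t, b (x ε s)) l
        (nhds (G t - η₀ - ζ t - ∫ s in (0:ℝ)..t, b (G s))) :=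
      (((hxG t ht).sub_const η₀).sub_const (ζ t)).sub (hintG t ht)
    have h2 : y t = G t - η₀ - ζ t - ∫ s in (0:ℝ)..t, b (G s) := by
      simp only [hydef, hzdef]
      ring
    rw [h2]
    apply h1.congr'
    filter_upwards [hεpos] with ε hε
    exact (hident ε hε t ht).symm
  have hG0 : G 0 = η₀ := by
    have h1 : Tendsto (fun ε => x ε 0) l (nhds (G 0)) := hxG 0 h0T
    have h2 : Tendsto (fun ε => x ε 0) l (nhds η₀) := by
      apply tendsto_const_nhds.congr'
      filter_upwards [hεpos] with ε hε
      have := hx ε hε 0 h0T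
      rw [intervalIntegral.integral_same, hζ0] at this
      rw [this]
      ring
    exact tendsto_nhds_unique h1 h2
  have hGnonneg : ∀ t ∈ Set.Icc 0 T, 0 ≤ G t := by
    intro t ht
    by_contra hneg
    push_neg at hneg
    set c : ℝ := -G t with hc
    have hc0 : 0 < c := by simp [hc]; linarith
    have ht0 : 0 < t := by
      rcases ht.1.lt_or_eq with h | h
      · exact h
      · exfalso; rw [← h, hG0] at hneg; linarith
    have hev : ∀ᶠ w in nhdsWithin t (Set.Icc 0 T), G w < -c / 2 := by
      apply (hG_cont t ht).eventually (eventually_lt_nhds ?_)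
      simp [hc]; linarith
    have hev' : {w : ℝ | G w < -c / 2} ∈ nhdsWithin t (Set.Icc 0 T) := hev
    rw [Metric.mem_nhdsWithin_iff] at hev'
    obtain ⟨δ, hδ0, hδ⟩ := hev'
    set t₁ : ℝ := max 0 (t - δ / 2) with ht₁def
    have ht₁t : t₁ < t := max_lt ht0 (by linarith)
    have ht₁m : t₁ ∈ Set.Icc 0 T := ⟨le_max_left _ _, le_trans ht₁t.le ht.2⟩
    have hGsmall : ∀ w ∈ Set.Icc t₁ t, G w < -c / 2 := by
      intro w hw
      have hw' : w ∈ Set.Icc 0 T := ⟨le_trans ht₁m.1 hw.1, le_trans hw.2 ht.2⟩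
      apply hδ
      refine ⟨?_, hw'⟩
      rw [Metric.mem_ball, Real.dist_eq, abs_lt]
      have h1 : t - δ / 2 ≤ t₁ := le_max_right _ _
      have h2 := hw.1
      have h3 := hw.2
      constructor <;> linarith
    have hfposc : 0 < f (-c / 4) := (hf_pos _ (by linarith)).1
    have hlow : ∀ᶠ ε in l, (1 / ε) * ((t - t₁) * f (-c / 4)) ≤
        (1 / ε) * ∫ s in (0 : ℝ)..t, f (x ε s) := by
      filter_upwards [h_unif (c / 4) (by linarith)] with ε hh
      obtain ⟨hε, hcl⟩ := hh
      have hxneg : ∀ w ∈ Set.Icc t₁ t, x ε w ≤ -c / 4 := by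
        intro w hw
        have hw' : w ∈ Set.Icc 0 T := ⟨le_trans ht₁m.1 hw.1, le_trans hw.2 ht.2⟩
        have h1 := hcl w hw'
        have h2 := hGsmall w hw
        have := abs_lt.1 h1
        linarith [this.1, this.2]
      have hsplit : (∫ s in (0:ℝ)..t₁, f (x ε s)) + (∫ s in t₁..t, f (x ε s)) =
          ∫ s in (0:ℝ)..t, f (x ε s) :=
        intervalIntegral.integral_add_adjacent_intervals (hIf ε hε 0 h0T t₁ ht₁m)
          (hIf ε hε t₁ ht₁m t ht)
      have h1 : (0:ℝ) ≤ ∫ s in (0:ℝ)..t₁, f (x ε s) :=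
        intervalIntegral.integral_nonneg ht₁m.1 (fun u _ => hf0 _)
      have h2 : (t - t₁) * f (-c / 4) ≤ ∫ s in t₁..t, f (x ε s) := by
        have hconst : (∫ _ in t₁..t, f (-c/4)) = (t - t₁) * f (-c/4) := by
          rw [intervalIntegral.integral_const, smul_eq_mul]
        rw [← hconst]
        apply intervalIntegral.integral_mono_on ht₁t.le
          (by simp [intervalIntegrable_const]) (hIf ε hε t₁ ht₁m t ht)
        intro u hu
        exact hf_anti (hxneg u hu)
      have hεinv : (0:ℝ) ≤ 1 / ε := by positivity
      apply mul_le_mul_of_nonneg_left ?_ hεinv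
      linarith
    have hatTop : Tendsto (fun ε => (1 / ε) * ((t - t₁) * f (-c / 4))) l atTop := by
      have h1 : Tendsto (fun ε : ℝ => 1 / ε) l atTop := by
        simpa [one_div] using tendsto_inv_nhdsGT_zero
      exact h1.atTop_mul_const (by nlinarith)
    have := tendsto_atTop_mono' l hlow hatTop
    exact not_tendsto_atTop_of_tendsto_nhds (hlim t ht) this
  -- Hölder continuity of z
  obtain ⟨Cζ, hCζ0, hCζ⟩ := hζ
  obtain ⟨M, hM⟩ : ∃ M : ℝ, ∀ s ∈ Set.Icc (0:ℝ) T, ‖b (G s)‖ ≤ M :=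
    isCompact_Icc.exists_bound_of_continuousOn (hbc.comp_continuousOn hG_cont)
  have hM0 : 0 ≤ M := le_trans (norm_nonneg _) (hM 0 h0T)
  set Cz : ℝ := Cζ + M * T ^ α with hCzdef
  have hCz0 : 0 ≤ Cz := add_nonneg hCζ0 (mul_nonneg hM0 (Real.rpow_nonneg hT.le α))
  have hzH : ∀ s ∈ Set.Icc (0:ℝ) T, ∀ t ∈ Set.Icc (0:ℝ) T,
      |z t - z s| ≤ Cz * |t - s| ^ (1 - α) := by
    intro s hs t ht
    have hint : (∫ u in (0:ℝ)..t, b (G u)) - ∫ u in (0:ℝ)..s, b (G u) =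
        ∫ u in s..t, b (G u) :=
      intervalIntegral.integral_interval_sub_left (hIbG 0 h0T t ht) (hIbG 0 h0T s hs)
    have hbound : |∫ u in s..t, b (G u)| ≤ M * |t - s| := by
      have hptw : ∀ u ∈ Set.uIoc s t, ‖b (G u)‖ ≤ M := by
        intro u hu
        exact hM u ((huIcc s hs t ht) (Set.uIoc_subset_uIcc hu))
      have := intervalIntegral.norm_integral_le_of_norm_le_const hptw
      simpa [Real.norm_eq_abs] using this
    have habs : |t - s| ≤ |t - s| ^ (1 - α) * T ^ α := by
      rcases eq_or_ne t s with h | h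
      · rw [h]
        simp [Real.zero_rpow (ne_of_gt hγ)]
      · have hpos : 0 < |t - s| := abs_pos.2 (sub_ne_zero.2 h)
        have heq : |t - s| = |t - s| ^ (1 - α) * |t - s| ^ α := by
          rw [← Real.rpow_add hpos]
          norm_num
        calc |t - s| = |t - s| ^ (1 - α) * |t - s| ^ α := heq
        _ ≤ |t - s| ^ (1 - α) * T ^ α := by
            apply mul_le_mul_of_nonneg_left ?_ (Real.rpow_nonneg (abs_nonneg _) _)
            apply Real.rpow_le_rpow (abs_nonneg _) ?_ hα0.le
            rw [abs_sub_le_iff]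
            constructor
            · linarith [ht.2, hs.1]
            · linarith [hs.2, ht.1]
    have hζb := hCζ s hs t ht
    calc |z t - z s| = |(ζ t - ζ s) + ∫ u in s..t, b (G u)| := by
          rw [← hint]
          simp only [hzdef]
          ring_nf
    _ ≤ |ζ t - ζ s| + |∫ u in s..t, b (G u)| := abs_add_le _ _
    _ ≤ Cζ * |t - s| ^ (1 - α) + M * |t - s| := by linarith
    _ ≤ Cζ * |t - s| ^ (1 - α) + M * (|t - s| ^ (1 - α) * T ^ α) := by
          have := mul_le_mul_of_nonneg_left habs hM0
          linarith
    _ = Cz * |t - s| ^ (1 - α) := by rw [hCzdef]; ring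
  have hzHolder : HolderOnIcc (1 - α) 0 T z := ⟨Cz, hCz0, hzH⟩
  have hzc : ContinuousOn z (Set.Icc 0 T) := holder_continuousOn hγ hzHolder
  have hyc : ContinuousOn y (Set.Icc 0 T) := hG_cont.sub hzc
  -- Constancy lemma
  have hCL : ∀ u ∈ Set.Icc (0:ℝ) T, ∀ v ∈ Set.Icc (0:ℝ) T, u ≤ v →
      (∀ w ∈ Set.Icc u v, 0 < G w) → y u = y v := by
    intro u hu v hv huv hpos
    have hIccsub : Set.Icc u v ⊆ Set.Icc 0 T := Set.Icc_subset_Icc hu.1 hv.2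
    obtain ⟨w₀, hw₀, hmin⟩ := isCompact_Icc.exists_isMinOn (Set.nonempty_Icc.2 huv)
      (hG_cont.mono hIccsub)
    have hc : 0 < G w₀ := hpos w₀ hw₀
    have hev : ∀ᶠ ε in l, (1 / ε) * (∫ s in (0:ℝ)..v, f (x ε s)) -
        (1 / ε) * (∫ s in (0:ℝ)..u, f (x ε s)) = 0 := by
      filter_upwards [h_unif (G w₀) hc] with ε hh
      obtain ⟨hε, hcl⟩ := hh
      have hfz : Set.EqOn (fun s => f (x ε s)) (fun _ => (0:ℝ)) (Set.uIcc u v) := by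
        intro s hsm
        have hs' : s ∈ Set.Icc u v := by rwa [Set.uIcc_of_le huv] at hsm
        have hxs : 0 < x ε s := by
          have h1 := hcl s (hIccsub hs')
          have h2 : G w₀ ≤ G s := hmin hs'
          have := abs_lt.1 h1
          linarith [this.1]
        simpa using hf_zero _ hxs.le
      have hsplit : (∫ s in (0:ℝ)..u, f (x ε s)) + (∫ s in u..v, f (x ε s)) =
          ∫ s in (0:ℝ)..v, f (x ε s) :=
        intervalIntegral.integral_add_adjacent_intervals (hIf ε hε 0 h0T u hu)
          (hIf ε hε u hu v hv)
      have hz2 : (∫ s in u..v, f (x ε s)) = 0 := by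
        rw [intervalIntegral.integral_congr hfz]
        simp
      rw [← hsplit, hz2]
      ring
    have h1 : Tendsto (fun ε => (1 / ε) * (∫ s in (0:ℝ)..v, f (x ε s)) -
        (1 / ε) * (∫ s in (0:ℝ)..u, f (x ε s))) l (nhds (y v - y u)) :=
      (hlim v hv).sub (hlim u hu)
    have h2 : Tendsto (fun ε => (1 / ε) * (∫ s in (0:ℝ)..v, f (x ε s)) -
        (1 / ε) * (∫ s in (0:ℝ)..u, f (x ε s))) l (nhds 0) := by
      apply tendsto_const_nhds.congr'
      filter_upwards [hev] with ε h
      exact h.symm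
    have := tendsto_nhds_unique h1 h2
    linarith
  have hy0 : y 0 = 0 := by
    simp only [hydef, hzdef, hG0, hζ0, intervalIntegral.integral_same]
    ring
  have hymono : MonotoneOn y (Set.Icc 0 T) := by
    intro s hs t ht hst
    have h1 : Tendsto (fun ε => (1 / ε) * (∫ u in (0:ℝ)..t, f (x ε u)) -
        (1 / ε) * (∫ u in (0:ℝ)..s, f (x ε u))) l (nhds (y t - y s)) :=
      (hlim t ht).sub (hlim s hs)
    have h2 : ∀ᶠ ε in l, 0 ≤ (1 / ε) * (∫ u in (0:ℝ)..t, f (x ε u)) -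
        (1 / ε) * (∫ u in (0:ℝ)..s, f (x ε u)) := by
      filter_upwards [hεpos] with ε hε
      have hsplit : (∫ u in (0:ℝ)..s, f (x ε u)) + (∫ u in s..t, f (x ε u)) =
          ∫ u in (0:ℝ)..t, f (x ε u) :=
        intervalIntegral.integral_add_adjacent_intervals (hIf ε hε 0 h0T s hs)
          (hIf ε hε s hs t ht)
      have hnn : (0:ℝ) ≤ ∫ u in s..t, f (x ε u) :=
        intervalIntegral.integral_nonneg hst (fun u _ => hf0 _)
      have hεinv : (0:ℝ) ≤ 1 / ε := by positivity
      rw [← hsplit]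
      rw [mul_add]
      nlinarith
    have := ge_of_tendsto h1 h2
    linarith
  -- Hölder bound for y
  have hyH : ∀ s ∈ Set.Icc (0:ℝ) T, ∀ t ∈ Set.Icc (0:ℝ) T, s ≤ t →
      |y t - y s| ≤ Cz * |t - s| ^ (1 - α) := by
    intro s hs t ht hst
    have hIccsub : Set.Icc s t ⊆ Set.Icc 0 T := Set.Icc_subset_Icc hs.1 ht.2
    have hrpow0 : 0 ≤ Cz * |t - s| ^ (1 - α) :=
      mul_nonneg hCz0 (Real.rpow_nonneg (abs_nonneg _) _)
    by_cases hbz : ∃ w ∈ Set.Icc s t, G w = 0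
    · set S : Set ℝ := Set.Icc s t ∩ G ⁻¹' {0} with hSdef
      have hSne : S.Nonempty := by
        obtain ⟨w, hw1, hw2⟩ := hbz
        exact ⟨w, hw1, hw2⟩
      have hSclosed : IsClosed S :=
        (hG_cont.mono hIccsub).preimage_isClosed_of_isClosed isClosed_Icc isClosed_singleton
      have hScompact : IsCompact S :=
        isCompact_Icc.of_isClosed_subset hSclosed Set.inter_subset_left
      set v : ℝ := sInf S with hvdef
      set u : ℝ := sSup S with hudef
      have hvS : v ∈ S := hScompact.sInf_mem hSne
      have huS : u ∈ S := hScompact.sSup_mem hSne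
      have hvu : v ≤ u := csInf_le_csSup hSne hScompact.bddBelow hScompact.bddAbove
      have hvm : v ∈ Set.Icc 0 T := hIccsub hvS.1
      have hum : u ∈ Set.Icc 0 T := hIccsub huS.1
      have hGv : G v = 0 := hvS.2
      have hGu : G u = 0 := huS.2
      -- y s = y v
      have hysv : y s = y v := by
        rcases eq_or_lt_of_le hvS.1.1 with h | h
        · rw [h]
        · have hconst : ∀ w ∈ Set.Ico s v, y w = y s := by
            intro w hw
            have hwm : w ∈ Set.Icc 0 T := ⟨le_trans hs.1 hw.1,
              le_trans (le_trans hw.2.le hvS.1.2) ht.2⟩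
            refine (hCL s hs w hwm hw.1 ?_).symm
            intro w' hw'
            have hw'2 : w' ∈ Set.Icc s t := ⟨hw'.1, le_trans (le_trans hw'.2 hw.2.le) hvS.1.2⟩
            rcases (hGnonneg w' (hIccsub hw'2)).lt_or_eq with hlt | heq
            · exact hlt
            · exfalso
              have : w' ∈ S := ⟨hw'2, heq.symm⟩
              have := csInf_le hScompact.bddBelow this
              have := lt_of_le_of_lt hw'.2 hw.2
              simp only [← hvdef] at *
              linarith
          have hne : (nhdsWithin v (Set.Ico s v)).NeBot := by
            apply mem_closure_iff_nhdsWithin_neBot.1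
            rw [closure_Ico (ne_of_lt h)]
            exact ⟨h.le, le_rfl⟩
          have h1 : Tendsto y (nhdsWithin v (Set.Ico s v)) (nhds (y v)) :=
            (hyc v hvm).mono (fun w hw => ⟨le_trans hs.1 hw.1,
              le_trans hw.2.le (le_trans hvS.1.2 ht.2)⟩)
          have h2 : Tendsto y (nhdsWithin v (Set.Ico s v)) (nhds (y s)) := by
            apply tendsto_const_nhds.congr'
            filter_upwards [self_mem_nhdsWithin] with w hw
            exact (hconst w hw).symm
          exact tendsto_nhds_unique h2 h1
      -- y u = y t
      have hyut : y u = y t := by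
        rcases eq_or_lt_of_le huS.1.2 with h | h
        · rw [h]
        · have hconst : ∀ w ∈ Set.Ioc u t, y w = y t := by
            intro w hw
            have hwm : w ∈ Set.Icc 0 T := ⟨le_trans hum.1 hw.1.le, le_trans hw.2 ht.2⟩
            refine hCL w hwm t ht hw.2 ?_
            intro w' hw'
            have hw'2 : w' ∈ Set.Icc s t := ⟨le_trans huS.1.1 (le_trans hw.1.le hw'.1), hw'.2⟩
            rcases (hGnonneg w' (hIccsub hw'2)).lt_or_eq with hlt | heq
            · exact hlt
            · exfalso
              have hmem : w' ∈ S := ⟨hw'2, heq.symm⟩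
              have := le_csSup hScompact.bddAbove hmem
              have := lt_of_lt_of_le hw.1 hw'.1
              simp only [← hudef] at *
              linarith
          have hne : (nhdsWithin u (Set.Ioc u t)).NeBot := by
            apply mem_closure_iff_nhdsWithin_neBot.1
            rw [closure_Ioc (ne_of_lt h)]
            exact ⟨le_rfl, h.le⟩
          have h1 : Tendsto y (nhdsWithin u (Set.Ioc u t)) (nhds (y u)) :=
            (hyc u hum).mono (fun w hw => ⟨le_trans hum.1 hw.1.le, le_trans hw.2 ht.2⟩)
          have h2 : Tendsto y (nhdsWithin u (Set.Ioc u t)) (nhds (y t)) := by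
            apply tendsto_const_nhds.congr'
            filter_upwards [self_mem_nhdsWithin] with w hw
            exact (hconst w hw).symm
          exact tendsto_nhds_unique h1 h2
      -- conclude
      have hyv : y v = -z v := by simp only [hydef, hGv]; ring
      have hyu : y u = -z u := by simp only [hydef, hGu]; ring
      have hdiff : y t - y s = z v - z u := by rw [← hyut, hysv, hyv, hyu]; ring
      have hzb := hzH u hum v hvm
      have hmon : |v - u| ^ (1 - α) ≤ |t - s| ^ (1 - α) := by
        apply Real.rpow_le_rpow (abs_nonneg _) ?_ hγ.le
        rw [abs_of_nonpos (by linarith), abs_of_nonneg (by linarith)]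
        have := hvS.1.1
        have := huS.1.2
        linarith
      calc |y t - y s| = |z v - z u| := by rw [hdiff]
      _ ≤ Cz * |v - u| ^ (1 - α) := hzb
      _ ≤ Cz * |t - s| ^ (1 - α) := mul_le_mul_of_nonneg_left hmon hCz0
    · push_neg at hbz
      have hpos : ∀ w ∈ Set.Icc s t, 0 < G w := fun w hw =>
        lt_of_le_of_ne (hGnonneg w (hIccsub hw)) (fun h => hbz w hw h.symm)
      rw [hCL s hs t ht hst hpos]
      simpa using hrpow0
  -- Hölder continuity of G
  have hGH : HolderOnIcc (1 - α) 0 T G := by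
    refine ⟨2 * Cz, by linarith, ?_⟩
    have key : ∀ s' ∈ Set.Icc (0:ℝ) T, ∀ t' ∈ Set.Icc (0:ℝ) T, s' ≤ t' →
        |G t' - G s'| ≤ 2 * Cz * |t' - s'| ^ (1 - α) := by
      intro s' hs' t' ht' h
      have h1 := hzH s' hs' t' ht'
      have h2 := hyH s' hs' t' ht' h
      have heq : G t' - G s' = (z t' - z s') + (y t' - y s') := by
        simp only [hydef]
        ring
      calc |G t' - G s'| ≤ |z t' - z s'| + |y t' - y s'| := by
            rw [heq]; exact abs_add_le _ _
      _ ≤ 2 * Cz * |t' - s'| ^ (1 - α) := by linarith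
    intro s hs t ht
    rcases le_total s t with h | h
    · exact key s hs t ht h
    · calc |G t - G s| = |G s - G t| := abs_sub_comm _ _
      _ ≤ 2 * Cz * |s - t| ^ (1 - α) := key t ht s hs h
      _ = 2 * Cz * |t - s| ^ (1 - α) := by rw [abs_sub_comm]
  -- Stieltjes integral vanishes
  have hSt : StieltjesIntegralZero T G y := by
    intro Y hY0 hYm hYT t ht
    have hU : Y.measure {w : ℝ | w ∈ Set.Icc 0 t ∧ 0 < G w} = 0 := by
      apply measure_null_of_locally_null
      intro s hsU
      obtain ⟨hst, hGs⟩ := hsU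
      have hsT : s ∈ Set.Icc 0 T := ⟨hst.1, le_trans hst.2 ht.2⟩
      have hev : ∀ᶠ w in nhdsWithin s (Set.Icc 0 T), 0 < G w :=
        (hG_cont s hsT).eventually (eventually_gt_nhds hGs)
      have hev' : {w : ℝ | 0 < G w} ∈ nhdsWithin s (Set.Icc 0 T) := hev
      rw [Metric.mem_nhdsWithin_iff] at hev'
      obtain ⟨δ, hδ0, hδ⟩ := hev'
      set a : ℝ := max 0 (s - δ / 2) with hadef
      set bb : ℝ := min T (s + δ / 2) with hbbdef
      have ham : a ∈ Set.Icc 0 T :=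
        ⟨le_max_left _ _, max_le hT.le (by have := hsT.2; linarith)⟩
      have hbbm : bb ∈ Set.Icc 0 T :=
        ⟨le_min hT.le (by have := hsT.1; linarith), min_le_left _ _⟩
      have has : a ≤ s := max_le hsT.1 (by linarith)
      have hsbb : s ≤ bb := le_min hsT.2 (by linarith)
      have habb : a ≤ bb := le_trans has hsbb
      have hpos : ∀ w ∈ Set.Icc a bb, 0 < G w := by
        intro w hw
        have hw' : w ∈ Set.Icc 0 T := ⟨le_trans ham.1 hw.1, le_trans hw.2 hbbm.2⟩
        apply hδ
        refine ⟨?_, hw'⟩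
        rw [Metric.mem_ball, Real.dist_eq, abs_lt]
        have h1 : s - δ / 2 ≤ a := le_max_right _ _
        have h2 : bb ≤ s + δ / 2 := min_le_right _ _
        have h3 := hw.1
        have h4 := hw.2
        constructor <;> linarith
      have hyab : y a = y bb := hCL a ham bb hbbm habb hpos
      set a' : ℝ := if 0 < a then a else (-1 : ℝ) with ha'def
      set b' : ℝ := if bb < T then bb else T + 1 with hb'def
      have hYa' : Y a' = y a := by
        by_cases h : 0 < a
        · rw [ha'def, if_pos h]
          exact hYm a ham
        · have ha0 : a = 0 := le_antisymm (not_lt.1 h) ham.1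
          rw [ha'def, if_neg h, hY0 (-1) (by norm_num), ha0, hy0]
      have hYb' : Y b' = y bb := by
        by_cases h : bb < T
        · rw [hb'def, if_pos h]
          exact hYm bb hbbm
        · have hbT : bb = T := le_antisymm hbbm.2 (not_lt.1 h)
          rw [hb'def, if_neg h, hYT (T + 1) (by linarith), hbT]
      have hmeas : Y.measure (Set.Ioc a' b') = 0 := by
        rw [Y.measure_Ioc, hYa', hYb', hyab]
        simp
      have ha's : a' < s := by
        by_cases h : 0 < a
        · rw [ha'def, if_pos h]
          have h2 : (0:ℝ) < s - δ / 2 := by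
            by_contra hc
            push_neg at hc
            rw [hadef, max_eq_left hc] at h
            exact lt_irrefl 0 h
          rw [hadef, max_eq_right h2.le]
          linarith
        · rw [ha'def, if_neg h]
          linarith [hsT.1]
      have hsb' : s < b' := by
        by_cases h : bb < T
        · rw [hb'def, if_pos h]
          rcases le_or_gt T (s + δ / 2) with hc | hc
          · rw [hbbdef, min_eq_left hc] at h
            exact absurd h (lt_irrefl T)
          · rw [hbbdef, min_eq_right hc.le]
            linarith
        · rw [hb'def, if_neg h]
          linarith [hsT.2]
      refine ⟨Set.Ioo a' b', ?_, measure_mono_null Set.Ioo_subset_Ioc_self hmeas⟩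
      exact mem_nhdsWithin_of_mem_nhds (isOpen_Ioo.mem_nhds ⟨ha's, hsb'⟩)
    have hae : ∀ᵐ w ∂Y.measure, w ∈ Set.Icc (0:ℝ) t → G w = 0 := by
      rw [ae_iff]
      apply measure_mono_null ?_ hU
      intro w hw
      simp only [Set.mem_setOf_eq] at hw ⊢
      push_neg at hw
      exact ⟨hw.1, lt_of_le_of_ne (hGnonneg w ⟨hw.1.1, le_trans hw.1.2 ht.2⟩)
        (Ne.symm hw.2)⟩
    have hae2 : ∀ᵐ w ∂(Y.measure.restrict (Set.Icc (0:ℝ) t)), G w = 0 :=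
      (ae_restrict_iff' measurableSet_Icc).2 hae
    exact integral_eq_zero_of_ae (hae2.mono fun w hw => by simpa using hw)
  refine ⟨y, hlim, hGnonneg, ?_, hy0, hyc, hymono, hSt, hGH⟩
  intro t ht
  simp only [hydef, hzdef]
  ring
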